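/- The simple graph G on vertex set {1,2,3,4,5,6,7} with edge set {{1,2},{1,5},{2,3},{2,6},{2,7},{3,4},{3,6},{4,5},{4,6},{5,6},{5,7}} (graph number 846 in the Atlas of Graphs) has minimum rank 3 over the real numbers. -/

import Mathlib

/-- Edge list of graph number 846 in the Atlas of Graphs (vertices 1..7). -/
def atlas846Edges : List (ℕ × ℕ) := [(1,2),(1,5),(2,3),(2,6),(2,7),(3,4),(3,6),(4,5),(4,6),(5,6),(5,7)]

/-- A witness matrix of rank 3 with the pattern of graph 846. -/
def atlasA : Matrix (Fin 7) (Fin 7) ℝ :=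
  !![0, 1, 0, 0, 1, 0, 0;
     1, -1, -3, 0, 0, -2, 1;
     0, -3, 1, 1, 0, 1, 0;
     0, 0, 1, 1, 3, 1, 0;
     1, 0, 0, 3, 10, 1, 1;
     0, -2, 1, 1, 1, 1, 0;
     0, 1, 0, 0, 1, 0, 0]

def atlasB : Matrix (Fin 3) (Fin 7) ℝ :=
  !![0, 0, 1, 1, 3, 1, 0;
     1, 0, -3, 0, 1, -2, 1;
     -1, 1, 3, 0, 0, 2, -1]

def atlasC : Matrix (Fin 3) (Fin 7) ℝ :=
  !![0, 0, 1, 1, 3, 1, 0;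
     1, 0, -3, 0, 1, -2, 1;
     1, -1, -3, 0, 0, -2, 1]

lemma atlasA_eq : atlasA = atlasB.transpose * atlasC := by
  ext i j
  rw [Matrix.mul_apply, Fin.sum_univ_three]
  fin_cases i <;> fin_cases j <;>
    simp [atlasA, atlasB, atlasC, Matrix.vecHead, Matrix.vecTail] <;> norm_num

/-- Any 7×7 real matrix whose pattern contains the induced path 1-2-3-4 of
graph 846 has rank at least 3. -/
lemma rank_ge_three (A : Matrix (Fin 7) (Fin 7) ℝ)
    (h01 : A 0 1 ≠ 0) (h12 : A 1 2 ≠ 0) (h23 : A 2 3 ≠ 0)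
    (h02 : A 0 2 = 0) (h03 : A 0 3 = 0) (h13 : A 1 3 = 0) :
    3 ≤ A.rank := by
  set r : Fin 3 → Fin 7 := ![0,1,2] with hr
  set c : Fin 3 → Fin 7 := ![1,2,3] with hc
  have hdet : (A.submatrix r c).det = A 0 1 * A 1 2 * A 2 3 := by
    rw [Matrix.det_fin_three]
    simp [hr, hc, h02, h03, h13]
  have hunit : IsUnit (A.submatrix r c) := by
    rw [Matrix.isUnit_iff_isUnit_det, hdet, isUnit_iff_ne_zero]
    exact mul_ne_zero (mul_ne_zero h01 h12) h23
  have hrank : (A.submatrix r c).rank = 3 := by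
    rw [Matrix.rank_of_isUnit _ hunit]; simp
  have e1 : ((1 : Matrix (Fin 7) (Fin 7) ℝ).submatrix r ⇑(Equiv.refl (Fin 7))) * A
      = A.submatrix r id := by
    simpa using Matrix.one_submatrix_mul r (Equiv.refl (Fin 7)) A
  have e2 : (A.submatrix r id) * ((1 : Matrix (Fin 7) (Fin 7) ℝ).submatrix ⇑(Equiv.refl (Fin 7)) c)
      = A.submatrix r c := by
    simpa [Matrix.submatrix_submatrix] using
      Matrix.mul_submatrix_one (Equiv.refl (Fin 7)) c (A.submatrix r id)
  calc (3 : ℕ) = (A.submatrix r c).rank := hrank.symm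
    _ = ((A.submatrix r id) * ((1 : Matrix (Fin 7) (Fin 7) ℝ).submatrix ⇑(Equiv.refl (Fin 7)) c)).rank := by rw [e2]
    _ ≤ (A.submatrix r id).rank := Matrix.rank_mul_le_left _ _
    _ = (((1 : Matrix (Fin 7) (Fin 7) ℝ).submatrix r ⇑(Equiv.refl (Fin 7))) * A).rank := by
        rw [e1]
    _ ≤ A.rank := Matrix.rank_mul_le_right _ _

lemma atlasA_pattern : ∀ i j : Fin 7, i ≠ j →
    (atlasA i j ≠ 0 ↔
      ((i.val + 1, j.val + 1) ∈ atlas846Edges ∨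
       (j.val + 1, i.val + 1) ∈ atlas846Edges)) := by
  intro i j hij
  fin_cases i <;> fin_cases j <;>
    first
    | exact absurd rfl hij
    | (constructor
       · intro _; decide
       · intro _; norm_num [atlasA])
    | (constructor
       · intro h; exact absurd (by norm_num [atlasA]) h
       · intro h; exact absurd h (by decide))

lemma atlasA_rank : atlasA.rank = 3 := by
  apply le_antisymm
  · rw [atlasA_eq]
    calc (atlasB.transpose * atlasC).rank ≤ atlasC.rank := Matrix.rank_mul_le_right _ _
      _ ≤ 3 := by simpa using atlasC.rank_le_card_height
  · apply rank_ge_three <;> simp [atlasA]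

/-- Graph number 846 in the Atlas of Graphs has minimum rank 3 over the reals:
3 is the least element of the set of ranks of real symmetric 7×7 matrices whose
off-diagonal zero/nonzero pattern matches the edges of the graph. -/
theorem atlas846_minRank_eq_three :
    IsLeast {r : ℕ | ∃ A : Matrix (Fin 7) (Fin 7) ℝ, A.IsSymm ∧
        (∀ i j : Fin 7, i ≠ j →
          (A i j ≠ 0 ↔
            ((i.val + 1, j.val + 1) ∈ atlas846Edges ∨
             (j.val + 1, i.val + 1) ∈ atlas846Edges))) ∧
        A.rank = r} 3 := by
  constructor
  · refine ⟨atlasA, ?_, atlasA_pattern, atlasA_rank⟩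
    ext i j
    fin_cases i <;> fin_cases j <;> rfl
  · rintro r ⟨A, hs, hp, rfl⟩
    have h01 : A 0 1 ≠ 0 := (hp 0 1 (by decide)).mpr (by decide)
    have h12 : A 1 2 ≠ 0 := (hp 1 2 (by decide)).mpr (by decide)
    have h23 : A 2 3 ≠ 0 := (hp 2 3 (by decide)).mpr (by decide)
    have h02 : A 0 2 = 0 := by
      by_contra h; exact absurd ((hp 0 2 (by decide)).mp h) (by decide)
    have h03 : A 0 3 = 0 := by
      by_contra h; exact absurd ((hp 0 3 (by decide)).mp h) (by decide)
    have h13 : A 1 3 = 0 := by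
      by_contra h; exact absurd ((hp 1 3 (by decide)).mp h) (by decide)
    exact rank_ge_three A h01 h12 h23 h02 h03 h13
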